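/- Let C be a closed, convex, unbounded set in a real Hilbert space H, and suppose there exist α, β > 0 and a subspace F ⊂ H such that α·B_F ⊆ C ⊆ D_F(α,β), where B_F is the closed unit ball of F and D_F(α,β) = { x ∈ H : ‖π_{F⊥}(x)‖ − β ≤ α⁻¹β‖π_F(x)‖ }. For λ, t > 0 define E_F(λ,t) = { x ∈ t·S_F : ‖π_C(x)‖ ≥ λ }, where S_F is the unit sphere of F and π_C is the nearest point projection onto C. Then for every λ > 0 there exist t ≥ λ and real numbers r, r' > 0 with r' > r such that r'·B_H ∩ C ⊆ E_F(λ,t) + r·B_H. -/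

import Mathlib

open Bornology Metric Pointwise

variable {H : Type*} [NormedAddCommGroup H] [InnerProductSpace ℝ H]

/-- `D_F(α,β) = { x ∈ H : ‖π_{F⊥}(x)‖ − β ≤ α⁻¹β‖π_F(x)‖ }`. -/
noncomputable def DSet [CompleteSpace H] (F : Submodule ℝ H) [Submodule.HasOrthogonalProjection F]
    (α β : ℝ) : Set H :=
  {x : H | ‖(Fᗮ.orthogonalProjectionOnto x : H)‖ - β ≤ α⁻¹ * β * ‖(F.orthogonalProjectionOnto x : H)‖}

set_option maxHeartbeats 1000000 in
open RealInnerProductSpace in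
/-- Let `C` be closed, convex and unbounded with `α·B_F ⊆ C ⊆ D_F(α,β)` for a subspace
`F ⊂ H` and `α, β > 0`. For `λ, t > 0` let `E_F(λ,t) = { x ∈ t·S_F : ‖π_C(x)‖ ≥ λ }`,
where `π_C` is the nearest point projection onto `C`. Then for every `λ > 0` there are
`t ≥ λ` and `r, r' > 0` with `r' > r` such that `r'·B_H ∩ C ⊆ E_F(λ,t) + r·B_H`. -/
theorem exists_sphere_net_cover [CompleteSpace H] (C : Set H) (hCcl : IsClosed C)
    (hCconv : Convex ℝ C) (hCub : ¬ IsBounded C)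
    (F : Submodule ℝ H) [Submodule.HasOrthogonalProjection F] (α β : ℝ) (hα : 0 < α) (hβ : 0 < β)
    (hball : {y : H | y ∈ F ∧ ‖y‖ ≤ α} ⊆ C) (hD : C ⊆ DSet F α β)
    (πC : H → H) (hπCmem : ∀ x : H, πC x ∈ C)
    (hπCproj : ∀ x : H, ∀ y ∈ C, dist x (πC x) ≤ dist x y)
    (lam : ℝ) (hlam : 0 < lam) :
    ∃ t : ℝ, lam ≤ t ∧ ∃ r r' : ℝ, 0 < r ∧ r < r' ∧
      closedBall (0 : H) r' ∩ C ⊆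
        {x : H | x ∈ F ∧ ‖x‖ = t ∧ lam ≤ ‖πC x‖} + closedBall (0 : H) r := by
  set k := α⁻¹ * β with hk
  have hk0 : 0 < k := by positivity
  have hkα : k * α = β := by rw [hk]; field_simp
  set lam' := max (lam - α) 0 with hlam'def
  have hlam'0 : 0 ≤ lam' := le_max_right _ _
  set t := lam + 1 + 4 * k ^ 2 * lam' with ht
  have h4k : 0 ≤ 4 * k ^ 2 * lam' := by positivity
  have htlam : lam ≤ t := by rw [ht]; linarith only [h4k]
  have ht0 : 0 < t := lt_of_lt_of_le hlam htlam
  set s := t + 2 * lam + α + 1 with hs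
  have hts : t ≤ s := by rw [hs]; linarith only [hlam, hα]
  have hs0 : 0 < s := lt_of_lt_of_le ht0 hts
  set M := s + β + k * s with hM
  have hM0 : 0 < M := by positivity
  set r := M + t + 1 with hr
  have hr0 : 0 < r := by positivity
  set r' := Real.sqrt (r ^ 2 + t * s) with hr'
  have hr'sq : r' ^ 2 = r ^ 2 + t * s := Real.sq_sqrt (by positivity)
  have hrr' : r < r' := by
    rw [hr']
    exact (Real.lt_sqrt hr0.le).mpr (by nlinarith only [ht0, hs0, hr0])
  clear_value k lam' t s M r r'
  refine ⟨t, htlam, r, r', hr0, hrr', ?_⟩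
  -- The key lemma: for `x ∈ C` with large `F`-projection, the normalized point on `t·S_F`
  -- in the direction of `π_F x` belongs to `E`.
  have key : ∀ x ∈ C, s ≤ ‖(F.orthogonalProjectionOnto x : H)‖ →
      (t * ‖(F.orthogonalProjectionOnto x : H)‖⁻¹) • (F.orthogonalProjectionOnto x : H) ∈
        {z : H | z ∈ F ∧ ‖z‖ = t ∧ lam ≤ ‖πC z‖} := by
    intro x hxC hax
    set a : H := (F.orthogonalProjectionOnto x : H) with ha
    set b : H := (Fᗮ.orthogonalProjectionOnto x : H) with hb
    have hxab : a + b = x := F.starProjection_add_starProjection_orthogonal x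
    have haF : a ∈ F := (F.orthogonalProjectionOnto x).2
    have hbF : b ∈ Fᗮ := (Fᗮ.orthogonalProjectionOnto x).2
    have hab : ⟪a, b⟫ = 0 := Submodule.inner_right_of_mem_orthogonal haF hbF
    have hbD : ‖b‖ - β ≤ k * ‖a‖ := by
      have h := hD hxC
      simp only [DSet, Set.mem_setOf_eq] at h
      rw [← ha, ← hb] at h
      rw [hk]
      exact h
    have hna : 0 < ‖a‖ := lt_of_lt_of_le hs0 hax
    have ha0 : a ≠ 0 := by
      intro h0
      rw [h0, norm_zero] at hna
      exact lt_irrefl _ hna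
    clear_value a b
    set u : H := ‖a‖⁻¹ • a with hu
    have hun : ‖u‖ = 1 := by
      rw [hu, norm_smul, Real.norm_eq_abs, abs_of_pos (by positivity), inv_mul_cancel₀ hna.ne']
    have huF : u ∈ F := F.smul_mem _ haF
    have haeu : ‖a‖ • u = a := by
      rw [hu, smul_smul, mul_inv_cancel₀ hna.ne', one_smul]
    clear_value u
    set e : H := t • u with he
    have hee : e = (t * ‖a‖⁻¹) • a := by rw [he, hu, smul_smul]
    have heF : e ∈ F := by rw [he]; exact F.smul_mem _ huF
    have hen : ‖e‖ = t := by
      rw [he, norm_smul, hun, Real.norm_eq_abs, abs_of_pos ht0, mul_one]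
    clear_value e
    set p : H := πC e with hp
    have hpC : p ∈ C := hπCmem e
    have hinf : ‖e - p‖ = ⨅ w : C, ‖e - w‖ := by
      haveI : Nonempty C := ⟨⟨p, hpC⟩⟩
      refine le_antisymm (le_ciInf fun w => ?_) ?_
      · rw [← dist_eq_norm, ← dist_eq_norm]
        exact hπCproj e w w.2
      · have hbdd : BddBelow (Set.range fun w : C => ‖e - (w : H)‖) :=
          ⟨0, by rintro _ ⟨w, rfl⟩; exact norm_nonneg _⟩
        exact ciInf_le hbdd ⟨p, hpC⟩
    have VI : ∀ w ∈ C, ⟪e - p, w - p⟫ ≤ 0 :=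
      (norm_eq_iInf_iff_real_inner_le_zero hCconv hpC).mp hinf
    clear_value p
    -- basic inner products
    set c : ℝ := ⟪u, p⟫ with hc
    have hpu : ⟪p, u⟫ = c := by rw [real_inner_comm]
    have hpp : ⟪p, p⟫ = ‖p‖ ^ 2 := real_inner_self_eq_norm_sq p
    have huu : ⟪u, u⟫ = 1 := by rw [real_inner_self_eq_norm_sq, hun]; norm_num
    have hua : ⟪u, a⟫ = ‖a‖ := by
      rw [hu, real_inner_smul_left, real_inner_self_eq_norm_sq, pow_two,
        inv_mul_cancel_left₀ hna.ne']
    have hub : ⟪u, b⟫ = 0 := by rw [hu, real_inner_smul_left, hab, mul_zero]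
    have hpa : ⟪p, a⟫ = ‖a‖ * c := by
      conv_lhs => rw [← haeu]
      rw [real_inner_smul_right, hpu]
    have hcp : c ≤ ‖p‖ := by
      have h := real_inner_le_norm u p
      rwa [hun, one_mul] at h
    have hc2 : c ^ 2 ≤ ‖p‖ ^ 2 := by
      have h := abs_real_inner_le_norm u p
      rw [hun, one_mul] at h
      obtain ⟨h1, h2⟩ := abs_le.mp h
      nlinarith only [h1, h2]
    -- the two variational inequalities
    have hαuC : α • u ∈ C := by
      refine hball ⟨F.smul_mem _ huF, ?_⟩
      rw [norm_smul, hun, mul_one, Real.norm_eq_abs, abs_of_pos hα]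
    have hI1 : t * α - (t + α) * c + ‖p‖ ^ 2 ≤ 0 := by
      have h := VI _ hαuC
      rw [he] at h
      simp only [inner_sub_left, inner_sub_right, real_inner_smul_left, real_inner_smul_right,
        huu, hpu, hc.symm, hpp] at h
      nlinarith only [h]
    have hI2 : t * ‖a‖ - (t + ‖a‖) * c - ⟪p, b⟫ + ‖p‖ ^ 2 ≤ 0 := by
      have h := VI _ hxC
      rw [he, ← hxab] at h
      simp only [inner_sub_left, inner_sub_right, inner_add_right, real_inner_smul_left,
        real_inner_smul_right, huu, hpu, hc.symm, hpp, hua, hub, hpa] at h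
      nlinarith only [h]
    -- bound on ⟪p, b⟫
    have hw2 : ‖p - c • u‖ ^ 2 = ‖p‖ ^ 2 - c ^ 2 := by
      have hcu : ‖c • u‖ = |c| := by rw [norm_smul, hun, mul_one, Real.norm_eq_abs]
      rw [norm_sub_sq_real, real_inner_smul_right, hpu, hcu, sq_abs]
      ring
    have hpb : ⟪p, b⟫ ≤ ‖p - c • u‖ * ‖b‖ := by
      have h1 : ⟪p - c • u, b⟫ = ⟪p, b⟫ := by
        rw [inner_sub_left, real_inner_smul_left, hub, mul_zero, sub_zero]
      calc ⟪p, b⟫ = ⟪p - c • u, b⟫ := h1.symm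
        _ ≤ ‖p - c • u‖ * ‖b‖ := real_inner_le_norm _ _
    have hbn : 0 ≤ ‖b‖ := norm_nonneg b
    -- main claim: lam ≤ ‖p‖
    have hfinal : lam ≤ ‖p‖ := by
      by_contra hcon
      push_neg at hcon
      have hclam : c < lam := lt_of_le_of_lt hcp hcon
      have hct : c < t := lt_of_lt_of_le hclam htlam
      have hQ0 : 0 ≤ ‖p‖ ^ 2 - c ^ 2 := by linarith only [hc2]
      -- from hI1 : ‖p‖² - c² ≤ (t - c)(c - α), hence c ≥ α
      have hQle : ‖p‖ ^ 2 - c ^ 2 ≤ (t - c) * (c - α) := by nlinarith only [hI1]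
      have hcα : α ≤ c := by
        by_contra hcon2
        push_neg at hcon2
        have hprod : 0 < (t - c) * (α - c) :=
          mul_pos (by linarith only [hct]) (by linarith only [hcon2])
        nlinarith only [hQle, hQ0, hprod]
      -- hence lam > α (otherwise contradiction)
      have hαlam : α < lam := lt_of_le_of_lt hcα hclam
      have hlam'eq : lam' = lam - α := by
        rw [hlam'def]
        exact max_eq_left (by linarith only [hαlam])
      have hdpos : 0 < t - c := by linarith only [hct]
      have hQle2 : ‖p - c • u‖ ^ 2 ≤ (t - c) * lam' := by
        rw [hw2, hlam'eq]
        nlinarith only [hQle, hclam, hdpos]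
      have hAc : 0 < ‖a‖ - c := by linarith only [hax, hclam, htlam, hts, hs, hα, hlam]
      have h7 : (t - c) * (‖a‖ - c) ≤ ‖p - c • u‖ * ‖b‖ := by
        nlinarith only [hI2, hpb, hw2, sq_nonneg ‖p - c • u‖]
      have hL : 0 ≤ (t - c) * (‖a‖ - c) := mul_nonneg hdpos.le hAc.le
      have h8 : ((t - c) * (‖a‖ - c)) ^ 2 ≤ (‖p - c • u‖ * ‖b‖) ^ 2 :=
        pow_le_pow_left₀ hL h7 2
      have hw2b : (‖p - c • u‖ * ‖b‖) ^ 2 ≤ ((t - c) * lam') * ‖b‖ ^ 2 := by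
        nlinarith only [hQle2, sq_nonneg ‖b‖]
      have h9' : (t - c) ^ 2 * (‖a‖ - c) ^ 2 ≤ (t - c) * (lam' * ‖b‖ ^ 2) := by
        nlinarith only [h8, hw2b]
      have h9 : (t - c) * (‖a‖ - c) ^ 2 ≤ lam' * ‖b‖ ^ 2 := by
        nlinarith only [h9', hdpos]
      have htl : 1 + 4 * k ^ 2 * lam' ≤ t - c := by
        rw [ht] at hct ⊢
        linarith only [hclam]
      have h10 : (1 + 4 * k ^ 2 * lam') * (‖a‖ - c) ^ 2 ≤ lam' * ‖b‖ ^ 2 := by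
        nlinarith only [h9, htl, sq_nonneg (‖a‖ - c)]
      have hlam'pos : 0 < lam' := by rw [hlam'eq]; linarith only [hαlam]
      have h11 : 4 * k ^ 2 * (‖a‖ - c) ^ 2 ≤ ‖b‖ ^ 2 := by
        nlinarith only [h10, hlam'pos, sq_nonneg (‖a‖ - c)]
      have hkA : 0 ≤ 2 * k * (‖a‖ - c) := by positivity
      have h12 : 2 * k * (‖a‖ - c) ≤ ‖b‖ := by
        have h2 : (2 * k * (‖a‖ - c)) ^ 2 ≤ ‖b‖ ^ 2 := by nlinarith only [h11]
        nlinarith only [h2, hbn, hkA]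
      -- now ‖b‖ ≤ β + k‖a‖ gives ‖a‖ ≤ α + 2c < s, contradiction
      have h13 : 2 * k * (‖a‖ - c) ≤ β + k * ‖a‖ := by linarith only [h12, hbD]
      have h14 : ‖a‖ ≤ α + 2 * c := by
        rw [← hkα] at h13
        nlinarith only [h13, hk0]
      have : ‖a‖ < s := by rw [hs]; linarith only [h14, hclam, ht0]
      exact absurd hax (not_le.mpr this)
    have hmem : e ∈ {z : H | z ∈ F ∧ ‖z‖ = t ∧ lam ≤ ‖πC z‖} :=
      ⟨heF, hen, by rw [← hp]; exact hfinal⟩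
    rw [hee] at hmem
    exact hmem
  -- a witness with large projection, from unboundedness
  have hx0 : ∃ x₀ ∈ C, s ≤ ‖(F.orthogonalProjectionOnto x₀ : H)‖ := by
    rw [isBounded_iff_forall_norm_le] at hCub
    push_neg at hCub
    obtain ⟨x₀, hx₀C, hx₀n⟩ := hCub (β + (1 + k) * s)
    refine ⟨x₀, hx₀C, ?_⟩
    set a : H := (F.orthogonalProjectionOnto x₀ : H) with ha
    set b : H := (Fᗮ.orthogonalProjectionOnto x₀ : H) with hb
    have hxab : a + b = x₀ := F.starProjection_add_starProjection_orthogonal x₀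
    have hbD : ‖b‖ - β ≤ k * ‖a‖ := by
      have h := hD hx₀C
      simp only [DSet, Set.mem_setOf_eq] at h
      rw [← ha, ← hb] at h
      rw [hk]
      exact h
    have hle : ‖x₀‖ ≤ ‖a‖ + ‖b‖ := by rw [← hxab]; exact norm_add_le a b
    nlinarith only [hx₀n, hle, hbD, hk0]
  obtain ⟨x₀, hx₀C, hx₀a⟩ := hx0
  have he₀ := key x₀ hx₀C hx₀a
  -- the covering
  intro x hx
  obtain ⟨hxball, hxC⟩ := hx
  have hxn : ‖x‖ ≤ r' := by rwa [mem_closedBall, dist_zero_right] at hxball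
  set a : H := (F.orthogonalProjectionOnto x : H) with ha
  set b : H := (Fᗮ.orthogonalProjectionOnto x : H) with hb
  have hxab : a + b = x := F.starProjection_add_starProjection_orthogonal x
  have haF : a ∈ F := (F.orthogonalProjectionOnto x).2
  have hbF : b ∈ Fᗮ := (Fᗮ.orthogonalProjectionOnto x).2
  have hab : ⟪a, b⟫ = 0 := Submodule.inner_right_of_mem_orthogonal haF hbF
  have hbD : ‖b‖ - β ≤ k * ‖a‖ := by
    have h := hD hxC
    simp only [DSet, Set.mem_setOf_eq] at h
    rw [← ha, ← hb] at h
    rw [hk]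
    exact h
  clear_value a b
  by_cases hcase : s ≤ ‖a‖
  · -- use the point in the direction of a
    have hkey := key x hxC (by rw [← ha]; exact hcase)
    rw [← ha] at hkey
    set e : H := (t * ‖a‖⁻¹) • a with he
    have hna : 0 < ‖a‖ := lt_of_lt_of_le hs0 hcase
    have hen : ‖e‖ = t := hkey.2.1
    refine Set.mem_add.mpr ⟨e, hkey, x - e, ?_, by abel⟩
    rw [mem_closedBall, dist_zero_right]
    have hxe2 : ‖x - e‖ ^ 2 = ‖x‖ ^ 2 - 2 * (t * ‖a‖) + t ^ 2 := by
      have hxe : ⟪x, e⟫ = t * ‖a‖ := by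
        rw [he, real_inner_smul_right, ← hxab, inner_add_left, real_inner_self_eq_norm_sq,
          real_inner_comm a b, hab]
        field_simp
        ring
      rw [norm_sub_sq_real, hxe, hen]
    have hx'2 : ‖x‖ ^ 2 ≤ r' ^ 2 := by nlinarith only [hxn, norm_nonneg x]
    have : ‖x - e‖ ^ 2 ≤ r ^ 2 := by
      nlinarith only [hxe2, hx'2, hr'sq, hcase, ht0, hts]
    nlinarith only [this, norm_nonneg (x - e), hr0]
  · -- use the fixed point e₀
    push_neg at hcase
    refine Set.mem_add.mpr ⟨_, he₀, x - _, ?_, by abel⟩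
    rw [mem_closedBall, dist_zero_right]
    have hen : ‖(t * ‖(F.orthogonalProjectionOnto x₀ : H)‖⁻¹) • (F.orthogonalProjectionOnto x₀ : H)‖ = t :=
      he₀.2.1
    have hxle : ‖x‖ ≤ ‖a‖ + ‖b‖ := by rw [← hxab]; exact norm_add_le a b
    have hble : ‖b‖ ≤ β + k * s := by nlinarith only [hbD, hcase, hk0]
    calc ‖x - (t * ‖(F.orthogonalProjectionOnto x₀ : H)‖⁻¹) • (F.orthogonalProjectionOnto x₀ : H)‖
        ≤ ‖x‖ + ‖(t * ‖(F.orthogonalProjectionOnto x₀ : H)‖⁻¹) • (F.orthogonalProjectionOnto x₀ : H)‖ :=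
          norm_sub_le _ _
      _ ≤ (‖a‖ + ‖b‖) + t := by rw [hen]; linarith [hxle]
      _ ≤ r := by rw [hr, hM]; linarith [hcase, hble]
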